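/- Let u and v be block laws on A^r × A and let t ∈ (0,1). Then J(t·u + (1−t)·v) ≥ t·J(u) + (1−t)·J(v). Moreover, equality holds if and only if η_v(c)·u(c,a) = η_u(c)·v(c,a) for every context c ∈ A^r and every symbol a ∈ A, i.e. if and only if for every context c the rows u(c,·) and v(c,·) are proportional. -/

import Mathlib

open Finset

/-- Context marginal of a block law on `A^(n+1) × A` (contexts are `Fin (n+1) → A`,
so the memory length is `r = n+1 ≥ 1`). -/
noncomputable def eta {A : Type*} [Fintype A] {n : ℕ}
    (u : (Fin (n + 1) → A) → A → ℝ) (c : Fin (n + 1) → A) : ℝ :=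
  ∑ a, u c a

/-- Entropy-rate functional.  In Lean, `Real.log 0 = 0` and `0 * x = 0`, so the
conventions `0·log 0 = 0` and "terms with `u(c,a) = 0` contribute `0`" hold
automatically. -/
noncomputable def J {A : Type*} [Fintype A] {n : ℕ}
    (u : (Fin (n + 1) → A) → A → ℝ) : ℝ :=
  -∑ c, ∑ a, u c a * Real.log (u c a / eta u c)

/-- A block law: nonnegative entries with total mass one. -/
def IsBlockLaw {A : Type*} [Fintype A] {n : ℕ}
    (u : (Fin (n + 1) → A) → A → ℝ) : Prop :=
  (∀ c a, 0 ≤ u c a) ∧ ∑ c, ∑ a, u c a = 1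

/-- The context `(α, d₁, …, d_{r-1})` obtained from `d = (d₁, …, d_r)` by
prepending `α` and dropping the last entry. -/
def shiftCtx {A : Type*} {n : ℕ} (α : A) (d : Fin (n + 1) → A) : Fin (n + 1) → A :=
  Fin.cons α (fun i : Fin n => d i.castSucc)

/-- Stationary consistency:
`∑_α u((α,d₁,…,d_{r-1}), d_r) = ∑_β u(d, β)` for every block `d`. -/
def StationaryConsistent {A : Type*} [Fintype A] {n : ℕ}
    (u : (Fin (n + 1) → A) → A → ℝ) : Prop :=
  ∀ d : Fin (n + 1) → A,
    ∑ α : A, u (shiftCtx α d) (d (Fin.last n)) = ∑ β : A, u d β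

/-- The feasible class determined by features `G` and targets `b`. -/
def Feasible {A : Type*} [Fintype A] {n m : ℕ}
    (G : Fin m → (Fin (n + 1) → A) → A → ℝ) (b : Fin m → ℝ)
    (u : (Fin (n + 1) → A) → A → ℝ) : Prop :=
  IsBlockLaw u ∧ StationaryConsistent u ∧
    ∀ j, ∑ c, ∑ a, u c a * G j c a = b j

/-- Log-sum inequality for two terms, with the equality case. -/
lemma logSum_two (a b x y : ℝ) (ha : 0 ≤ a) (hb : 0 ≤ b) (hax : a ≤ x) (hby : b ≤ y) :
    (a + b) * Real.log ((a + b) / (x + y)) ≤ a * Real.log (a / x) + b * Real.log (b / y) ∧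
    ((a + b) * Real.log ((a + b) / (x + y)) = a * Real.log (a / x) + b * Real.log (b / y) ↔
      a * y = b * x) := by
  have hx : 0 ≤ x := ha.trans hax
  have hy : 0 ≤ y := hb.trans hby
  rcases eq_or_lt_of_le hx with hx0 | hx0
  · have haz : a = 0 := le_antisymm (hax.trans hx0.symm.le) ha
    subst haz; simp [← hx0]
  rcases eq_or_lt_of_le hy with hy0 | hy0
  · have hbz : b = 0 := le_antisymm (hby.trans hy0.symm.le) hb
    subst hbz; simp [← hy0]
  have hxy : 0 < x + y := by linarith
  rcases eq_or_lt_of_le ha with ha0 | ha0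
  · subst ha0
    rcases eq_or_lt_of_le hb with hb0 | hb0
    · subst hb0; simp
    · have hlt : b * Real.log ((0 + b) / (x + y)) < b * Real.log (b / y) := by
        rw [zero_add]
        apply mul_lt_mul_of_pos_left _ hb0
        apply Real.log_lt_log (by positivity)
        apply div_lt_div_of_pos_left hb0 hy0 (by linarith)
      constructor
      · rw [zero_add] at *; nlinarith [hlt]
      · constructor
        · intro h; rw [zero_add] at *; nlinarith [hlt]
        · intro h; nlinarith
  rcases eq_or_lt_of_le hb with hb0 | hb0
  · subst hb0
    have hlt : a * Real.log ((a + 0) / (x + y)) < a * Real.log (a / x) := by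
      rw [add_zero]
      apply mul_lt_mul_of_pos_left _ ha0
      apply Real.log_lt_log (by positivity)
      apply div_lt_div_of_pos_left ha0 hx0 (by linarith)
    constructor
    · nlinarith [hlt]
    · constructor
      · intro h; nlinarith [hlt]
      · intro h; nlinarith
  -- core case: a,b,x,y > 0
  have hlam : (0:ℝ) < x / (x + y) := by positivity
  have hmu : (0:ℝ) < y / (x + y) := by positivity
  have hsum : x / (x + y) + y / (x + y) = 1 := by field_simp
  have hmix : x / (x + y) * (a / x) + y / (x + y) * (b / y) = (a + b) / (x + y) := by
    field_simp
  have hconv := Real.convexOn_mul_log.2 (Set.mem_Ici.2 (by positivity : (0:ℝ) ≤ a / x))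
    (Set.mem_Ici.2 (by positivity : (0:ℝ) ≤ b / y)) hlam.le hmu.le hsum
  simp only [smul_eq_mul] at hconv
  rw [hmix] at hconv
  have hmain : (a + b) * Real.log ((a + b) / (x + y)) ≤
      a * Real.log (a / x) + b * Real.log (b / y) := by
    calc (a + b) * Real.log ((a + b) / (x + y))
        = ((a + b) / (x + y) * Real.log ((a + b) / (x + y))) * (x + y) := by
          field_simp
      _ ≤ (x / (x + y) * (a / x * Real.log (a / x)) +
            y / (x + y) * (b / y * Real.log (b / y))) * (x + y) := by
          apply mul_le_mul_of_nonneg_right hconv hxy.le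
      _ = a * Real.log (a / x) + b * Real.log (b / y) := by
          field_simp
  refine ⟨hmain, ?_, ?_⟩
  · intro heq
    by_contra hne
    have hratio : a / x ≠ b / y := by
      intro h; apply hne
      field_simp at h; linarith [h]
    have hstrict := Real.strictConvexOn_mul_log.2
      (Set.mem_Ici.2 (by positivity : (0:ℝ) ≤ a / x))
      (Set.mem_Ici.2 (by positivity : (0:ℝ) ≤ b / y)) hratio hlam hmu hsum
    simp only [smul_eq_mul] at hstrict
    rw [hmix] at hstrict
    have h2 : (a + b) * Real.log ((a + b) / (x + y)) <
        a * Real.log (a / x) + b * Real.log (b / y) := by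
      calc (a + b) * Real.log ((a + b) / (x + y))
          = ((a + b) / (x + y) * Real.log ((a + b) / (x + y))) * (x + y) := by
            field_simp
        _ < (x / (x + y) * (a / x * Real.log (a / x)) +
              y / (x + y) * (b / y * Real.log (b / y))) * (x + y) := by
            apply mul_lt_mul_of_pos_right hstrict hxy
        _ = a * Real.log (a / x) + b * Real.log (b / y) := by
            field_simp
    linarith
  · intro h
    have hr : (a + b) / (x + y) = a / x := by
      rw [div_eq_div_iff (by linarith) hx0.ne']; linear_combination -h
    have hr2 : b / y = a / x := by
      rw [div_eq_div_iff hy0.ne' hx0.ne']; linear_combination -h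
    rw [hr, hr2]
    ring

/-- Concavity of `J` along segments of block laws, with equality
exactly when the rows of `u` and `v` are proportional in every context. -/
theorem stmt2 {A : Type*} [Fintype A] [Nonempty A] {n : ℕ}
    (u v : (Fin (n + 1) → A) → A → ℝ)
    (hu : IsBlockLaw u) (hv : IsBlockLaw v)
    (t : ℝ) (ht : t ∈ Set.Ioo (0 : ℝ) 1) :
    t * J u + (1 - t) * J v ≤ J (fun c a => t * u c a + (1 - t) * v c a) ∧
      (J (fun c a => t * u c a + (1 - t) * v c a) = t * J u + (1 - t) * J v ↔
        ∀ c a, eta v c * u c a = eta u c * v c a) := by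
  obtain ⟨ht0, ht1⟩ := ht
  have h1t : (0:ℝ) < 1 - t := by linarith
  have hetaw : ∀ c : Fin (n+1) → A,
      eta (fun c a => t * u c a + (1 - t) * v c a) c = t * eta u c + (1 - t) * eta v c := by
    intro c
    simp [eta, Finset.sum_add_distrib, Finset.mul_sum]
  have hkey : ∀ (c : Fin (n+1) → A) (a : A),
      ((t * u c a + (1 - t) * v c a) *
          Real.log ((t * u c a + (1 - t) * v c a) / (t * eta u c + (1 - t) * eta v c)) ≤
        t * u c a * Real.log (u c a / eta u c) +
          (1 - t) * v c a * Real.log (v c a / eta v c)) ∧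
      ((t * u c a + (1 - t) * v c a) *
          Real.log ((t * u c a + (1 - t) * v c a) / (t * eta u c + (1 - t) * eta v c)) =
        t * u c a * Real.log (u c a / eta u c) +
          (1 - t) * v c a * Real.log (v c a / eta v c) ↔
        eta v c * u c a = eta u c * v c a) := by
    intro c a
    have huP : u c a ≤ eta u c := Finset.single_le_sum (fun b _ => hu.1 c b) (mem_univ a)
    have hvQ : v c a ≤ eta v c := Finset.single_le_sum (fun b _ => hv.1 c b) (mem_univ a)
    have hk := logSum_two (t * u c a) ((1 - t) * v c a) (t * eta u c) ((1 - t) * eta v c)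
      (by have := hu.1 c a; positivity) (by have := hv.1 c a; positivity)
      (by nlinarith [hu.1 c a]) (by nlinarith [hv.1 c a])
    have e1 : t * u c a / (t * eta u c) = u c a / eta u c :=
      mul_div_mul_left _ _ ht0.ne'
    have e2 : (1 - t) * v c a / ((1 - t) * eta v c) = v c a / eta v c :=
      mul_div_mul_left _ _ h1t.ne'
    rw [e1, e2] at hk
    refine ⟨hk.1, hk.2.trans ?_⟩
    have hc : t * (1 - t) ≠ 0 := by positivity
    constructor
    · intro h
      apply mul_left_cancel₀ hc
      linear_combination h
    · intro h
      linear_combination t * (1 - t) * h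
  set Su := ∑ c, ∑ a, u c a * Real.log (u c a / eta u c) with hSu
  set Sv := ∑ c, ∑ a, v c a * Real.log (v c a / eta v c) with hSv
  set Sw := ∑ c : Fin (n+1) → A, ∑ a, (t * u c a + (1 - t) * v c a) *
      Real.log ((t * u c a + (1 - t) * v c a) / (t * eta u c + (1 - t) * eta v c)) with hSw
  have hJw : J (fun c a => t * u c a + (1 - t) * v c a) = -Sw := by
    rw [J, hSw]
    congr 1
    refine Finset.sum_congr rfl fun c _ => Finset.sum_congr rfl fun a _ => ?_
    rw [hetaw c]
  have hsplit : (∑ c : Fin (n+1) → A, ∑ a, (t * u c a * Real.log (u c a / eta u c) +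
      (1 - t) * v c a * Real.log (v c a / eta v c))) = t * Su + (1 - t) * Sv := by
    simp [Finset.sum_add_distrib, Finset.mul_sum, hSu, hSv, mul_assoc]
  have hle : Sw ≤ t * Su + (1 - t) * Sv := by
    rw [← hsplit, hSw]
    exact Finset.sum_le_sum fun c _ => Finset.sum_le_sum fun a _ => (hkey c a).1
  have hiff : Sw = t * Su + (1 - t) * Sv ↔ ∀ c a, eta v c * u c a = eta u c * v c a := by
    have hEq : (∑ c : Fin (n+1) → A, ∑ a,
        ((t * u c a * Real.log (u c a / eta u c) +
          (1 - t) * v c a * Real.log (v c a / eta v c)) -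
         (t * u c a + (1 - t) * v c a) *
          Real.log ((t * u c a + (1 - t) * v c a) / (t * eta u c + (1 - t) * eta v c))))
        = (t * Su + (1 - t) * Sv) - Sw := by
      rw [← hsplit, hSw, ← Finset.sum_sub_distrib]
      exact Finset.sum_congr rfl fun c _ => Finset.sum_sub_distrib _ _
    constructor
    · intro h
      have h0 : (∑ c : Fin (n+1) → A, ∑ a,
          ((t * u c a * Real.log (u c a / eta u c) +
            (1 - t) * v c a * Real.log (v c a / eta v c)) -
           (t * u c a + (1 - t) * v c a) *
            Real.log ((t * u c a + (1 - t) * v c a) / (t * eta u c + (1 - t) * eta v c))))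
          = 0 := by rw [hEq, h]; ring
      have houter := (Finset.sum_eq_zero_iff_of_nonneg
        (fun c _ => Finset.sum_nonneg fun a _ => sub_nonneg.2 (hkey c a).1)).1 h0
      intro c a
      have hinner := (Finset.sum_eq_zero_iff_of_nonneg
        (fun a (_ : a ∈ univ) => sub_nonneg.2 (hkey c a).1)).1 (houter c (mem_univ c))
      have := sub_eq_zero.1 (hinner a (mem_univ a))
      exact (hkey c a).2.1 this.symm
    · intro h
      have h0 : ∀ c : Fin (n+1) → A, ∀ a : A,
          ((t * u c a * Real.log (u c a / eta u c) +
            (1 - t) * v c a * Real.log (v c a / eta v c)) -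
           (t * u c a + (1 - t) * v c a) *
            Real.log ((t * u c a + (1 - t) * v c a) / (t * eta u c + (1 - t) * eta v c))) = 0 :=
        fun c a => sub_eq_zero.2 ((hkey c a).2.2 (h c a)).symm
      have : ((t * Su + (1 - t) * Sv) - Sw) = 0 := by
        rw [← hEq]
        exact Finset.sum_eq_zero fun c _ => Finset.sum_eq_zero fun a _ => h0 c a
      linarith
  constructor
  · rw [hJw, J, J, ← hSu, ← hSv]
    linarith
  · rw [hJw, J, J, ← hSu, ← hSv]
    constructor
    · intro h
      exact hiff.1 (by linarith)
    · intro h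
      have := hiff.2 h
      linarith
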